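/- arXiv:2205.06120 — 2 statements merged into one kernel-verified Lean document; each statement's English description precedes it below -/
import Mathlib

section
/- The Carlitz exponential exp_C, defined as the 𝔽_q-linear power series exp_C(z) = Σ_{i≥0} z^{q^i}/D_i where D_0 = 1 and D_i = ∏_{j=0}^{i-1}(θ^{q^i} - θ^{q^j}), satisfies the functional equation exp_C(θ z) = θ exp_C(z) + exp_C(z)^q as an identity of formal power series over 𝔽_q(θ). -/
open PowerSeries

/-- The `n`-th coefficient of `f ^ m` only depends on the truncation of `f` beyond `n`. -/
lemma coeff_pow_eq_coeff_trunc_pow {R : Type*} [CommRing R] (f : PowerSeries R)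
    (m n N : ℕ) (h : n < N) :
    PowerSeries.coeff (R := R) n (f ^ m) = ((PowerSeries.trunc N f) ^ m : Polynomial R).coeff n := by
  have hdvd : (PowerSeries.X : PowerSeries R) ^ N ∣
      f - ((PowerSeries.trunc N f : Polynomial R) : PowerSeries R) := by
    rw [PowerSeries.X_pow_dvd_iff]
    intro i hi
    simp [Polynomial.coeff_coe, PowerSeries.coeff_trunc, hi]
  have h2 : (PowerSeries.X : PowerSeries R) ^ N ∣
      f ^ m - ((PowerSeries.trunc N f : Polynomial R) : PowerSeries R) ^ m :=
    hdvd.trans (sub_dvd_pow_sub_pow _ _ m)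
  rw [PowerSeries.X_pow_dvd_iff] at h2
  have := h2 n h
  rw [map_sub, sub_eq_zero] at this
  rw [this, ← Polynomial.coe_pow, Polynomial.coeff_coe]

/-- Frobenius for power series: coefficients of `f ^ p ^ k` in characteristic `p`. -/
lemma coeff_pow_prime_pow {R : Type*} [CommRing R] (p k : ℕ) [hp : Fact p.Prime] [CharP R p]
    (f : PowerSeries R) (n : ℕ) :
    PowerSeries.coeff (R := R) n (f ^ p ^ k) =
      if p ^ k ∣ n then (PowerSeries.coeff (R := R) (n / p ^ k) f) ^ p ^ k else 0 := by
  haveI : ExpChar R p := ExpChar.prime hp.out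
  have hq : 0 < p ^ k := pow_pos hp.out.pos k
  rw [coeff_pow_eq_coeff_trunc_pow f (p ^ k) n (n + 1) (Nat.lt_succ_self n)]
  rw [← Polynomial.map_iterateFrobenius_expand, Polynomial.coeff_map, Polynomial.coeff_expand hq]
  split_ifs with h
  · rw [iterateFrobenius_def, PowerSeries.coeff_trunc,
      if_pos (Nat.lt_succ_of_le (Nat.div_le_self n _))]
  · simp

/-- The Carlitz exponential `exp_C(z) = Σ_{i≥0} z^{q^i}/D_i`, with
`D_0 = 1`, `D_i = ∏_{j<i} (θ^{q^i} - θ^{q^j})`, satisfies the functional equation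
`exp_C(θ z) = θ exp_C(z) + exp_C(z)^q` as formal power series over `𝔽_q(θ)`.
Here `𝔽_q(θ)` is modelled as `RatFunc 𝔽` with `θ = X`. -/
theorem stmt_3 (𝔽 : Type*) [Field 𝔽] [Fintype 𝔽] (q : ℕ) (hq : q = Fintype.card 𝔽)
    (D : ℕ → RatFunc 𝔽)
    (hD : ∀ i : ℕ, D i = ∏ j ∈ Finset.range i,
      ((RatFunc.X : RatFunc 𝔽) ^ q ^ i - RatFunc.X ^ q ^ j))
    (E : PowerSeries (RatFunc 𝔽))
    (hE1 : ∀ i : ℕ, PowerSeries.coeff (R := RatFunc 𝔽) (q ^ i) E = (D i)⁻¹)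
    (hE2 : ∀ k : ℕ, (∀ i : ℕ, k ≠ q ^ i) → PowerSeries.coeff (R := RatFunc 𝔽) k E = 0) :
    PowerSeries.rescale (RatFunc.X : RatFunc 𝔽) E =
      PowerSeries.C (R := RatFunc 𝔽) RatFunc.X * E + E ^ q := by
  classical
  -- characteristic setup
  set p : ℕ := ringChar 𝔽 with hpdef
  haveI : CharP 𝔽 p := ringChar.charP 𝔽
  obtain ⟨k, hpprime, hcard⟩ := FiniteField.card 𝔽 p
  haveI : Fact p.Prime := ⟨hpprime⟩
  haveI : CharP (RatFunc 𝔽) p :=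
    charP_of_injective_algebraMap (algebraMap 𝔽 (RatFunc 𝔽)).injective p
  have hqpk : q = p ^ (k : ℕ) := by rw [hq, hcard]
  have hq2 : 2 ≤ q := hq ▸ Fintype.one_lt_card
  have hq0 : 0 < q := by omega
  -- X ^ a ≠ X ^ b for a ≠ b
  have hXinj : ∀ a b : ℕ, a ≠ b → (RatFunc.X : RatFunc 𝔽) ^ a ≠ RatFunc.X ^ b := by
    intro a b hab h
    apply hab
    have h2 : (Polynomial.X : Polynomial 𝔽) ^ a = Polynomial.X ^ b := by
      apply IsFractionRing.injective (Polynomial 𝔽) (RatFunc 𝔽)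
      rw [map_pow, map_pow, RatFunc.algebraMap_X]
      exact h
    have h3 := congrArg Polynomial.natDegree h2
    simpa using h3
  -- D i ≠ 0
  have hDne : ∀ i, D i ≠ 0 := by
    intro i
    rw [hD i]
    apply Finset.prod_ne_zero_iff.mpr
    intro j hj
    rw [Finset.mem_range] at hj
    exact sub_ne_zero.mpr (hXinj _ _ (by
      have := Nat.pow_lt_pow_right (by omega : 1 < q) hj
      omega))
  -- recurrence D (i+1) = (X^{q^{i+1}} - X) * (D i)^q
  have hDrec : ∀ i, D (i + 1) = ((RatFunc.X : RatFunc 𝔽) ^ q ^ (i + 1) - RatFunc.X) * (D i) ^ q := by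
    intro i
    rw [hD (i + 1), hD i, Finset.prod_range_succ', ← Finset.prod_pow]
    rw [mul_comm]
    congr 1
    · simp
    · apply Finset.prod_congr rfl
      intro j _
      symm
      have hsub : ∀ a b : RatFunc 𝔽, (a - b) ^ q = a ^ q - b ^ q := by
        intro a b
        rw [hqpk]
        exact sub_pow_char_pow a b (k : ℕ)
      rw [hsub, ← pow_mul, ← pow_mul, ← pow_succ, ← pow_succ]
  -- coefficients of E ^ q
  have hEq : ∀ n : ℕ, PowerSeries.coeff (R := RatFunc 𝔽) n (E ^ q) =
      if q ∣ n then (PowerSeries.coeff (R := RatFunc 𝔽) (n / q) E) ^ q else 0 := by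
    intro n
    rw [hqpk]
    exact coeff_pow_prime_pow p k E n
  ext n
  rw [PowerSeries.coeff_rescale, map_add, PowerSeries.coeff_C_mul, hEq]
  by_cases hpow : ∃ i, n = q ^ i
  · obtain ⟨i, rfl⟩ := hpow
    rw [hE1 i]
    cases i with
    | zero =>
      have : ¬ q ∣ q ^ 0 := by
        rw [pow_zero]
        intro h
        have := Nat.le_of_dvd one_pos h
        omega
      rw [if_neg this, hD 0]
      simp
    | succ i =>
      have hdvd : q ∣ q ^ (i + 1) := dvd_pow_self q (Nat.succ_ne_zero i)
      rw [if_pos hdvd]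
      have hdiv : q ^ (i + 1) / q = q ^ i := by
        rw [pow_succ, Nat.mul_div_cancel _ hq0]
      rw [hdiv, hE1 i]
      have h1 : D (i + 1) ≠ 0 := hDne (i + 1)
      have h2 : D i ≠ 0 := hDne i
      rw [hDrec i] at h1 ⊢
      have h3 : ((RatFunc.X : RatFunc 𝔽) ^ q ^ (i + 1) - RatFunc.X) ≠ 0 := by
        intro h; apply h1; rw [h, zero_mul]
      field_simp
      have h4 : D i ^ q * (D i)⁻¹ ^ q = 1 := by rw [← mul_pow, mul_inv_cancel₀ h2, one_pow]
      linear_combination (RatFunc.X - (RatFunc.X : RatFunc 𝔽) ^ (q * q ^ i)) * h4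
  · push_neg at hpow
    rw [hE2 n (fun i => hpow i)]
    rw [mul_zero, mul_zero, zero_add]
    split_ifs with h
    · obtain ⟨m, rfl⟩ := h
      have hm : ∀ i : ℕ, m ≠ q ^ i := by
        intro i hmi
        exact hpow (i + 1) (by rw [hmi, pow_succ, mul_comm])
      rw [Nat.mul_div_cancel_left _ hq0, hE2 m hm, zero_pow (by omega)]
    · rfl
end

section
/- Let D = diag(d_1,…,d_r) be a diagonal matrix over a nonarchimedean normed field with ‖d_j^{-1}‖ < 1 for all j, and suppose the norm of each (D^{-1})^{(j)} (Frobenius-twisted inverse) is bounded by a constant ρ < 1 uniformly in j ≤ -1. If E is strictly upper triangular, then the norm of the product (D^{-1}+E)^{(-1)} (D^{-1}+E)^{(-2)} ⋯ (D^{-1}+E)^{(-i)} tends to 0 as i → ∞. -/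
/-- Let `D⁻¹` (here called `A`) be diagonal with all Frobenius twists
`(D⁻¹)^{(-j)} = A.map (τ j)` (`j ≥ 1`) of norm at most `ρ < 1`, let `E` be strictly upper
triangular with twists of norm at most `C`. Then the norm of the product
`(D⁻¹+E)^{(-1)} (D⁻¹+E)^{(-2)} ⋯ (D⁻¹+E)^{(-i)}` tends to `0` as `i → ∞`
(matrix norms being the suprema of the entry norms, in a nonarchimedean seminormed ring,
where every diagonal entry of `A` satisfies `‖(A i i)⁻¹-type bound‖ < 1` via `ρ`). -/
theorem stmt_9 (T : Type*) [SeminormedCommRing T] [IsUltrametricDist T] (r : ℕ)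
    (τ : ℕ → T →+* T)
    (A E : Matrix (Fin r) (Fin r) T)
    (hAdiag : ∀ i j : Fin r, i ≠ j → A i j = 0)
    (hAnorm : ∀ i : Fin r, ‖A i i‖ < 1)
    (ρ : ℝ) (hρ : ρ < 1)
    (hρA : ∀ j : ℕ, 1 ≤ j → (⨆ a : Fin r, ⨆ b : Fin r, ‖(A.map (τ j)) a b‖) ≤ ρ)
    (hE : ∀ i j : Fin r, j ≤ i → E i j = 0)
    (C : ℝ) (hC : ∀ j : ℕ, 1 ≤ j → (⨆ a : Fin r, ⨆ b : Fin r, ‖(E.map (τ j)) a b‖) ≤ C) :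
    Filter.Tendsto (fun i : ℕ =>
        ⨆ a : Fin r, ⨆ b : Fin r,
          ‖(List.ofFn fun j : Fin i => (A + E).map (τ ((j : ℕ) + 1))).prod a b‖)
      Filter.atTop (nhds 0) := by
  classical
  rcases Nat.eq_zero_or_pos r with hr | hr
  · subst hr
    have : (fun i : ℕ =>
        ⨆ a : Fin 0, ⨆ b : Fin 0,
          ‖(List.ofFn fun j : Fin i => (A + E).map (τ ((j : ℕ) + 1))).prod a b‖) = fun _ => 0 := by
      funext i
      exact Real.iSup_of_isEmpty _
    rw [this]
    exact tendsto_const_nhds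
  set C' : ℝ := max 1 (max C ρ) with hC'def
  set ρ' : ℝ := max ρ 0 with hρ'def
  have hC'1 : (1:ℝ) ≤ C' := le_max_left _ _
  have hCC' : C ≤ C' := le_trans (le_max_left _ _) (le_max_right _ _)
  have hρC' : ρ' ≤ C' := by
    apply max_le (le_trans (le_max_right _ _) (le_max_right _ _)) (le_trans zero_le_one hC'1)
  have hρ'0 : 0 ≤ ρ' := le_max_right _ _
  have hρ'1 : ρ' < 1 := by simp [hρ'def, hρ]
  have hρρ' : ρ ≤ ρ' := le_max_left _ _
  set B : ℕ → Matrix (Fin r) (Fin r) T := fun j => (A + E).map (τ j) with hBdef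
  set P : ℕ → ℕ → Matrix (Fin r) (Fin r) T :=
    fun s i => (List.ofFn fun j : Fin i => B (s + (j : ℕ) + 1)).prod with hPdef
  -- extraction from double sup
  have extract : ∀ (M : Matrix (Fin r) (Fin r) T) (c : ℝ),
      (⨆ a : Fin r, ⨆ b : Fin r, ‖M a b‖) ≤ c → ∀ a b, ‖M a b‖ ≤ c := by
    intro M c h a b
    have h1 : ‖M a b‖ ≤ ⨆ b, ‖M a b‖ :=
      le_ciSup (Set.Finite.bddAbove (Set.finite_range fun b => ‖M a b‖)) b
    have h2 : (⨆ b, ‖M a b‖) ≤ ⨆ a, ⨆ b, ‖M a b‖ :=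
      le_ciSup (Set.Finite.bddAbove (Set.finite_range fun a => ⨆ b, ‖M a b‖)) a
    exact le_trans h1 (le_trans h2 h)
  -- entry bounds for B
  have hBdiag : ∀ j : ℕ, 1 ≤ j → ∀ a : Fin r, ‖B j a a‖ ≤ ρ' := by
    intro j hj a
    have : B j a a = (A.map (τ j)) a a := by
      simp [hBdef, Matrix.map_apply, Matrix.add_apply, hE a a le_rfl]
    rw [this]
    exact le_trans (extract _ _ (hρA j hj) a a) hρρ'
  have hBupper : ∀ j : ℕ, 1 ≤ j → ∀ a b : Fin r, a < b → ‖B j a b‖ ≤ C' := by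
    intro j hj a b hab
    have : B j a b = (E.map (τ j)) a b := by
      simp [hBdef, Matrix.map_apply, Matrix.add_apply, hAdiag a b (ne_of_lt hab)]
    rw [this]
    exact le_trans (extract _ _ (hC j hj) a b) hCC'
  have hBlow : ∀ j : ℕ, ∀ a b : Fin r, b < a → B j a b = 0 := by
    intro j a b hab
    simp [hBdef, Matrix.map_apply, Matrix.add_apply, hAdiag a b (ne_of_lt hab).symm,
      hE a b (le_of_lt hab)]
  -- recursion
  have hrec : ∀ s i, P s (i + 1 + 1) = B (s + 1) * P (s + 1) (i + 1) := by
    intro s i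
    have hfun : (fun j : Fin (i + 1) => B (s + ((j.succ : Fin (i + 1 + 1)) : ℕ) + 1)) =
        fun j : Fin (i + 1) => B (s + 1 + (j : ℕ) + 1) := by
      funext j
      congr 1
      rw [Fin.val_succ]
      ring
    have hl : (List.ofFn fun j : Fin (i + 1 + 1) => B (s + (j : ℕ) + 1)) =
        B (s + 1) :: List.ofFn fun j : Fin (i + 1) => B (s + 1 + (j : ℕ) + 1) := by
      rw [List.ofFn_succ, hfun]
      norm_num
    rw [hPdef]
    simp only [hl, List.prod_cons]
  -- key bound
  have key : ∀ i s (a b : Fin r),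
      ((b : ℕ) < a → P s (i + 1) a b = 0) ∧
      ‖P s (i + 1) a b‖ ≤ C' ^ ((b : ℕ) - (a : ℕ)) * ρ' ^ ((i + 1) - ((b : ℕ) - (a : ℕ))) := by
    intro i
    induction i with
    | zero =>
      intro s a b
      have hP1 : P s 1 = B (s + 1) := by
        simp [hPdef]
      constructor
      · intro hba
        rw [hP1]
        exact hBlow _ a b (by exact_mod_cast hba)
      · rw [hP1]
        rcases lt_trichotomy ((a:ℕ)) ((b:ℕ)) with h | h | h
        · have h1 : (1:ℕ) - ((b:ℕ) - (a:ℕ)) = 0 := by omega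
          rw [h1, pow_zero, mul_one]
          refine le_trans (hBupper _ (Nat.le_add_left 1 _) a b (by exact_mod_cast h)) ?_
          calc C' = C' ^ 1 := (pow_one _).symm
            _ ≤ C' ^ ((b:ℕ) - (a:ℕ)) := pow_le_pow_right₀ hC'1 (by omega)
        · have hab : a = b := Fin.ext h
          subst hab
          simp only [Nat.sub_self, pow_zero, one_mul, Nat.sub_zero, zero_add, pow_one]
          exact hBdiag _ (Nat.le_add_left 1 s) a
        · have : B (s+1) a b = 0 := hBlow _ a b (by exact_mod_cast h)
          rw [this]
          simp only [norm_zero]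
          positivity
    | succ i ih =>
      intro s a b
      have hmul : P s (i + 1 + 1) a b =
          ∑ k : Fin r, B (s + 1) a k * P (s + 1) (i + 1) k b := by
        rw [hrec s i, Matrix.mul_apply]
      constructor
      · intro hba
        rw [hmul]
        apply Finset.sum_eq_zero
        intro k _
        rcases lt_or_ge ((k:ℕ)) ((a:ℕ)) with hk | hk
        · rw [hBlow _ a k (by exact_mod_cast hk), zero_mul]
        · rw [(ih (s+1) k b).1 (by omega), mul_zero]
      · rw [hmul]
        apply IsUltrametricDist.norm_sum_le_of_forall_le_of_nonneg
        · positivity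
        intro k _
        rcases lt_trichotomy ((k:ℕ)) ((a:ℕ)) with hk | hk | hk
        · rw [hBlow _ a k (by exact_mod_cast hk), zero_mul, norm_zero]
          positivity
        · have hka : k = a := Fin.ext hk
          rw [hka]
          refine le_trans (norm_mul_le _ _) ?_
          calc ‖B (s+1) a a‖ * ‖P (s+1) (i+1) a b‖
              ≤ ρ' * (C' ^ ((b:ℕ) - (a:ℕ)) * ρ' ^ ((i + 1) - ((b:ℕ) - (a:ℕ)))) := by
                apply mul_le_mul (hBdiag _ (Nat.le_add_left 1 _) a) ((ih (s+1) a b).2) (norm_nonneg _)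
                  hρ'0
            _ = C' ^ ((b:ℕ) - (a:ℕ)) * ρ' ^ ((i + 1) - ((b:ℕ) - (a:ℕ)) + 1) := by ring
            _ ≤ C' ^ ((b:ℕ) - (a:ℕ)) * ρ' ^ ((i + 1 + 1) - ((b:ℕ) - (a:ℕ))) := by
                apply mul_le_mul_of_nonneg_left _ (by positivity)
                exact pow_le_pow_of_le_one hρ'0 (le_of_lt hρ'1) (by omega)
        · rcases lt_or_ge ((b:ℕ)) ((k:ℕ)) with hbk | hbk
          · rw [(ih (s+1) k b).1 (by omega), mul_zero, norm_zero]
            positivity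
          · refine le_trans (norm_mul_le _ _) ?_
            calc ‖B (s+1) a k‖ * ‖P (s+1) (i+1) k b‖
                ≤ C' * (C' ^ ((b:ℕ) - (k:ℕ)) * ρ' ^ ((i + 1) - ((b:ℕ) - (k:ℕ)))) := by
                  apply mul_le_mul (hBupper _ (Nat.le_add_left 1 _) a k (by exact_mod_cast hk))
                    ((ih (s+1) k b).2) (norm_nonneg _) (by positivity)
              _ = C' ^ ((b:ℕ) - (k:ℕ) + 1) * ρ' ^ ((i + 1) - ((b:ℕ) - (k:ℕ))) := by ring
              _ ≤ C' ^ ((b:ℕ) - (a:ℕ)) * ρ' ^ ((i + 1 + 1) - ((b:ℕ) - (a:ℕ))) := by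
                  apply mul_le_mul (pow_le_pow_right₀ hC'1 (by omega))
                    (pow_le_pow_of_le_one hρ'0 (le_of_lt hρ'1) (by omega))
                    (by positivity) (by positivity)
  -- conclude
  have hub : ∀ i : ℕ, 1 ≤ i →
      (⨆ a : Fin r, ⨆ b : Fin r,
        ‖(List.ofFn fun j : Fin i => (A + E).map (τ ((j : ℕ) + 1))).prod a b‖)
        ≤ C' ^ r * ρ' ^ (i - r) := by
    intro i hi
    have hPi : (List.ofFn fun j : Fin i => (A + E).map (τ ((j : ℕ) + 1))).prod = P 0 i := by
      show _ = (List.ofFn fun j : Fin i => B (0 + (j : ℕ) + 1)).prod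
      exact congrArg List.prod
        (congrArg List.ofFn (funext fun j => by simp only [hBdef, zero_add]))
    rw [hPi]
    haveI : Nonempty (Fin r) := Fin.pos_iff_nonempty.mp hr
    apply ciSup_le
    intro a
    apply ciSup_le
    intro b
    obtain ⟨m, rfl⟩ : ∃ m, i = m + 1 := ⟨i - 1, by omega⟩
    refine le_trans (key m 0 a b).2 ?_
    have hba : (b:ℕ) - (a:ℕ) ≤ r - 1 := by omega
    apply mul_le_mul (pow_le_pow_right₀ hC'1 (by omega))
      (pow_le_pow_of_le_one hρ'0 (le_of_lt hρ'1) (by omega)) (by positivity) (by positivity)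
  have hlb : ∀ i : ℕ, (0:ℝ) ≤
      ⨆ a : Fin r, ⨆ b : Fin r,
        ‖(List.ofFn fun j : Fin i => (A + E).map (τ ((j : ℕ) + 1))).prod a b‖ := by
    intro i
    apply Real.iSup_nonneg
    intro a
    apply Real.iSup_nonneg
    intro b
    exact norm_nonneg _
  have htend : Filter.Tendsto (fun i : ℕ => C' ^ r * ρ' ^ (i - r)) Filter.atTop (nhds 0) := by
    have h1 : Filter.Tendsto (fun i : ℕ => ρ' ^ (i - r)) Filter.atTop (nhds 0) :=
      (tendsto_pow_atTop_nhds_zero_of_lt_one hρ'0 hρ'1).comp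
        (Filter.tendsto_sub_atTop_nat r)
    simpa using h1.const_mul (C' ^ r)
  apply squeeze_zero' (Filter.Eventually.of_forall hlb) ?_ htend
  filter_upwards [Filter.eventually_ge_atTop 1] with i hi
  exact hub i hi
end
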